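/- arXiv:1606.00724 — 4 statements merged into one kernel-verified Lean document; each statement's English description precedes it below -/
import Mathlib

section
/- Under the block structure assumption on B and positive definiteness of A_0, the covariance matrix C(t) = ∫_0^t e^{sB} A e^{sB^T} ds is symmetric positive definite for every t > 0 (so that the Gaussian kernel Γ_0 is well defined). -/
open MeasureTheory Matrix Finset

noncomputable section

/-- Index set for `ℝ^d` split into groups of sizes `p 0, …, p r`:
the element `⟨i, a⟩` is the `a`-th coordinate of the `i`-th group. -/
abbrev Idx (r : ℕ) (p : Fin (r + 1) → ℕ) : Type := (i : Fin (r + 1)) × Fin (p i)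

variable {r : ℕ} {p : Fin (r + 1) → ℕ}

/-- The dilation exponent `σ_j = 2i+1` for a coordinate `j` in group `i`. -/
def sigmaWt (j : Idx r p) : ℕ := 2 * (j.1 : ℕ) + 1

/-- The `B`-length `|β|_B = Σ_j σ_j β_j` of a multi-index `β`. -/
def bwt (β : Idx r p → ℕ) : ℕ := ∑ j, sigmaWt j * β j

/-- The homogeneous norm `[x]_B = Σ_j |x_j|^{1/σ_j}`. -/
def hnorm (x : Idx r p → ℝ) : ℝ := ∑ j, |x j| ^ (1 / (sigmaWt j : ℝ))

/-- Structural assumption on the matrix `B`: the group sizes are decreasing and positive,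
the only nonzero blocks are the subdiagonal ones `B_1, …, B_r`, and the block `B_i`
(of size `p i × p (i-1)`) has full rank `p i`. -/
structure IsKolB (B : Matrix (Idx r p) (Idx r p) ℝ) : Prop where
  anti : Antitone p
  ppos : ∀ i, 1 ≤ p i
  sparse : ∀ j k : Idx r p, (j.1 : ℕ) ≠ (k.1 : ℕ) + 1 → B j k = 0
  rk : ∀ i k : Fin (r + 1), (i : ℕ) = (k : ℕ) + 1 →
    (Matrix.of fun (a : Fin (p i)) (b : Fin (p k)) => B ⟨i, a⟩ ⟨k, b⟩).rank = p i

/-- Matrix exponential `e^M = Σ_n M^n / n!` (defined entrywise). -/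
def mexp (M : Matrix (Idx r p) (Idx r p) ℝ) : Matrix (Idx r p) (Idx r p) ℝ :=
  Matrix.of fun i j => ∑' n : ℕ, ((n.factorial : ℝ)⁻¹ • M ^ n) i j

/-- The `d×d` matrix whose top-left `p 0 × p 0` block is `A₀` and whose other entries vanish. -/
def embed0 (A₀ : Matrix (Fin (p 0)) (Fin (p 0)) ℝ) : Matrix (Idx r p) (Idx r p) ℝ :=
  Matrix.of fun j k =>
    if h : j.1 = 0 ∧ k.1 = 0 then
      A₀ (Fin.cast (congrArg p h.1) j.2) (Fin.cast (congrArg p h.2) k.2)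
    else 0

/-- The covariance matrix `C(t) = ∫_0^t e^{sB} A e^{sBᵀ} ds`. -/
def covMat (B A : Matrix (Idx r p) (Idx r p) ℝ) (t : ℝ) :
    Matrix (Idx r p) (Idx r p) ℝ :=
  Matrix.of fun j k => ∫ s in (0:ℝ)..t, (mexp (s • B) * A * (mexp (s • B))ᵀ) j k

/-- The Gaussian kernel
`Γ₀(t,x;s,y) = (2π)^{-d/2} |det C(s-t)|^{-1/2} exp(-⟨C(s-t)⁻¹(y-e^{(s-t)B}x), y-e^{(s-t)B}x⟩/2)`. -/
def gauss (B A : Matrix (Idx r p) (Idx r p) ℝ)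
    (t : ℝ) (x : Idx r p → ℝ) (s : ℝ) (y : Idx r p → ℝ) : ℝ :=
  (2 * Real.pi) ^ (-(Fintype.card (Idx r p) : ℝ) / 2) *
    |(covMat B A (s - t)).det| ^ (-(1:ℝ) / 2) *
    Real.exp (-(1/2) *
      ((covMat B A (s - t))⁻¹ *ᵥ (y - mexp ((s - t) • B) *ᵥ x)) ⬝ᵥ
        (y - mexp ((s - t) • B) *ᵥ x))

/-- Partial derivative `∂_{x_i}`. -/
def pdx (i : Idx r p) (f : (Idx r p → ℝ) → ℝ) : (Idx r p → ℝ) → ℝ :=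
  fun x => fderiv ℝ f x (Pi.single i 1)

/-- Iterated partial derivative `D^β = ∂_{x_1}^{β_1} ⋯ ∂_{x_d}^{β_d}`. -/
def Dx (β : Idx r p → ℕ) (f : (Idx r p → ℝ) → ℝ) : (Idx r p → ℝ) → ℝ :=
  (Finset.univ (α := Idx r p)).toList.foldr (fun i g => (pdx i)^[β i] g) f

/-- The indices of the first group (coordinates `1, …, p_0`). -/
def G0set (r : ℕ) (p : Fin (r + 1) → ℕ) : Finset (Idx r p) :=
  Finset.univ.filter fun i => (i.1 : ℕ) = 0

/-- A vector supported in the coordinates of the first group. -/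
def suppG0 (ξ : Idx r p → ℝ) : Prop := ∀ i : Idx r p, (i.1 : ℕ) ≠ 0 → ξ i = 0

/-- The vector field `Y f(t,x) = ⟨Bx, ∇_x f⟩ + ∂_t f`. -/
def Yop (B : Matrix (Idx r p) (Idx r p) ℝ)
    (f : ℝ → (Idx r p → ℝ) → ℝ) : ℝ → (Idx r p → ℝ) → ℝ :=
  fun t x => (∑ j, (B *ᵥ x) j * pdx j (f t) x) + deriv (fun τ => f τ x) t

/-- The derivative `Y^k ∂_x^β f`. -/
def YDx (B : Matrix (Idx r p) (Idx r p) ℝ) (k : ℕ) (β : Idx r p → ℕ)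
    (f : ℝ → (Idx r p → ℝ) → ℝ) : ℝ → (Idx r p → ℝ) → ℝ :=
  (Yop B)^[k] (fun t => Dx β (f t))

/-- The multi-index factorial `β! = Π_j (β_j)!`. -/
def mfact (β : Idx r p → ℕ) : ℕ := ∏ j, (β j).factorial

/-- The `n`-th order intrinsic Taylor polynomial of `a` centered at `z̄ = (tb, xb)`:
`T_n(a,z̄)(t,x) = Σ_{2k+|β|_B ≤ n} (1/(k!β!)) (Y^k ∂^β a)(z̄) (t-tb)^k (x-e^{(t-tb)B}xb)^β`,
with `T_n ≡ 0` for `n < 0`. -/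
def Tpoly (B : Matrix (Idx r p) (Idx r p) ℝ) (a : ℝ → (Idx r p → ℝ) → ℝ)
    (tb : ℝ) (xb : Idx r p → ℝ) (n : ℤ) : ℝ → (Idx r p → ℝ) → ℝ :=
  fun t x =>
    ∑ k ∈ Finset.range (n.toNat + 1),
      ∑ β ∈ Fintype.piFinset (fun _ : Idx r p => Finset.range (n.toNat + 1)),
        if 2 * (k : ℤ) + (bwt β : ℤ) ≤ n then
          ((k.factorial * mfact β : ℕ) : ℝ)⁻¹ * YDx B k β a tb xb * (t - tb) ^ k *
            ∏ j, (x j - (mexp ((t - tb) • B) *ᵥ xb) j) ^ β j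
        else 0

/-- `M̄(t) = e^{-tB} C(t) e^{-tBᵀ}`. -/
def Mbar (B A : Matrix (Idx r p) (Idx r p) ℝ) (t : ℝ) : Matrix (Idx r p) (Idx r p) ℝ :=
  mexp (-(t • B)) * covMat B A t * (mexp (-(t • B)))ᵀ

/-- The first order operator `M_i(t,x) f = (e^{tB}x)_i f + (e^{tB} M̄(t) ∇_x f)_i`. -/
def Mop (B A : Matrix (Idx r p) (Idx r p) ℝ) (τ : ℝ) (i : Idx r p)
    (f : (Idx r p → ℝ) → ℝ) : (Idx r p → ℝ) → ℝ :=
  fun x => (mexp (τ • B) *ᵥ x) i * f x + ((mexp (τ • B) * Mbar B A τ) *ᵥ fun j => pdx j f x) i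

/-- The composition `M^β = M_1^{β_1} ∘ ⋯ ∘ M_d^{β_d}`. -/
def Mpow (B A : Matrix (Idx r p) (Idx r p) ℝ) (τ : ℝ) (β : Idx r p → ℕ)
    (f : (Idx r p → ℝ) → ℝ) : (Idx r p → ℝ) → ℝ :=
  (Finset.univ (α := Idx r p)).toList.foldr (fun i g => (Mop B A τ i)^[β i] g) f

/-- The shifted operator `(M_i(τ,x) - c) f`. -/
def MopShift (B A : Matrix (Idx r p) (Idx r p) ℝ) (τ : ℝ) (c : ℝ) (i : Idx r p)
    (f : (Idx r p → ℝ) → ℝ) : (Idx r p → ℝ) → ℝ :=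
  fun x => Mop B A τ i f x - c * f x

/-- The composition `(M(τ,x) - c)^β` of shifted operators. -/
def MshiftPow (B A : Matrix (Idx r p) (Idx r p) ℝ) (τ : ℝ) (c : Idx r p → ℝ)
    (β : Idx r p → ℕ) (f : (Idx r p → ℝ) → ℝ) : (Idx r p → ℝ) → ℝ :=
  (Finset.univ (α := Idx r p)).toList.foldr (fun i g => (MopShift B A τ (c i) i)^[β i] g) f

/-- The operator `W_i(τ) f = (e^{-τBᵀ} ∇_x f)_i`. -/
def Wop (B : Matrix (Idx r p) (Idx r p) ℝ) (τ : ℝ) (i : Idx r p)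
    (f : (Idx r p → ℝ) → ℝ) : (Idx r p → ℝ) → ℝ :=
  fun x => (mexp (-(τ • Bᵀ)) *ᵥ fun j => pdx j f x) i

/-- The composition `W^β(τ) = W_1^{β_1}(τ) ∘ ⋯ ∘ W_d^{β_d}(τ)`. -/
def Wpow (B : Matrix (Idx r p) (Idx r p) ℝ) (τ : ℝ) (β : Idx r p → ℕ)
    (f : (Idx r p → ℝ) → ℝ) : (Idx r p → ℝ) → ℝ :=
  (Finset.univ (α := Idx r p)).toList.foldr (fun i g => (Wop B τ i)^[β i] g) f

/-- The Taylor polynomial `T_n(a,z̄)(s,·)` with the commuting operators `M_i(τ,x)` substituted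
for the spatial arguments. -/
def TpolyOp (B A : Matrix (Idx r p) (Idx r p) ℝ) (a : ℝ → (Idx r p → ℝ) → ℝ)
    (tb : ℝ) (xb : Idx r p → ℝ) (n : ℤ) (s τ : ℝ)
    (f : (Idx r p → ℝ) → ℝ) : (Idx r p → ℝ) → ℝ :=
  fun x =>
    ∑ k ∈ Finset.range (n.toNat + 1),
      ∑ β ∈ Fintype.piFinset (fun _ : Idx r p => Finset.range (n.toNat + 1)),
        if 2 * (k : ℤ) + (bwt β : ℤ) ≤ n then
          ((k.factorial * mfact β : ℕ) : ℝ)⁻¹ * YDx B k β a tb xb * (s - tb) ^ k *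
            MshiftPow B A τ (mexp ((s - tb) • B) *ᵥ xb) β f x
        else 0

/-- The operator `G_n(t,s,x)` of the expansion. -/
def Gop (B A : Matrix (Idx r p) (Idx r p) ℝ)
    (a : Idx r p → Idx r p → ℝ → (Idx r p → ℝ) → ℝ)
    (aD : Idx r p → ℝ → (Idx r p → ℝ) → ℝ) (tb : ℝ) (xb : Idx r p → ℝ)
    (n : ℤ) (t s : ℝ) (f : (Idx r p → ℝ) → ℝ) : (Idx r p → ℝ) → ℝ :=
  fun x =>
    (1/2) * ∑ i ∈ G0set r p, ∑ j ∈ G0set r p,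
        (TpolyOp B A (a i j) tb xb n s (s - t) (Wop B (s - t) i (Wop B (s - t) j f)) x
          - TpolyOp B A (a i j) tb xb (n - 1) s (s - t) (Wop B (s - t) i (Wop B (s - t) j f)) x)
      + ∑ i ∈ G0set r p,
        (TpolyOp B A (aD i) tb xb (n - 1) s (s - t) (Wop B (s - t) i f) x
          - TpolyOp B A (aD i) tb xb (n - 2) s (s - t) (Wop B (s - t) i f) x)

/-- `((K_n - K_{n-1}) g)(s,ξ)` for a purely spatial function `g`. -/
def Kdiff (B : Matrix (Idx r p) (Idx r p) ℝ)
    (a : Idx r p → Idx r p → ℝ → (Idx r p → ℝ) → ℝ)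
    (aD : Idx r p → ℝ → (Idx r p → ℝ) → ℝ) (tb : ℝ) (xb : Idx r p → ℝ)
    (n : ℤ) (g : (Idx r p → ℝ) → ℝ) (s : ℝ) (ξ : Idx r p → ℝ) : ℝ :=
  (1/2) * ∑ i ∈ G0set r p, ∑ j ∈ G0set r p,
      (Tpoly B (a i j) tb xb n s ξ - Tpoly B (a i j) tb xb (n - 1) s ξ) * pdx i (pdx j g) ξ
    + ∑ i ∈ G0set r p, (Tpoly B (aD i) tb xb (n - 1) s ξ - Tpoly B (aD i) tb xb (n - 2) s ξ) *
        pdx i g ξ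

/-- The matrix `A(z̄)` with top-left block `(a_{ij}(z̄))` and zeros elsewhere. -/
def AzMat (a : Idx r p → Idx r p → ℝ → (Idx r p → ℝ) → ℝ) (tb : ℝ) (xb : Idx r p → ℝ) :
    Matrix (Idx r p) (Idx r p) ℝ :=
  Matrix.of fun i j => if (i.1 : ℕ) = 0 ∧ (j.1 : ℕ) = 0 then a i j tb xb else 0

/-- `u₀(t,x) = ∫ Γ₀(t,x;T,y) φ(y) dy`. -/
def u0fn (B A : Matrix (Idx r p) (Idx r p) ℝ) (T : ℝ) (φ : (Idx r p → ℝ) → ℝ)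
    (t : ℝ) (x : Idx r p → ℝ) : ℝ :=
  ∫ y : Idx r p → ℝ, gauss B A t x T y * φ y

/-- The Duhamel recursion: `u_0 = ∫ Γ₀ φ` and
`u_n(t,x) = ∫_t^T ∫ Γ₀(t,x;s,ξ) Σ_{h=1}^n ((K_h - K_{h-1}) u_{n-h})(s,ξ) dξ ds`. -/
def useq (B : Matrix (Idx r p) (Idx r p) ℝ)
    (a : Idx r p → Idx r p → ℝ → (Idx r p → ℝ) → ℝ)
    (aD : Idx r p → ℝ → (Idx r p → ℝ) → ℝ) (tb : ℝ) (xb : Idx r p → ℝ)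
    (T : ℝ) (φ : (Idx r p → ℝ) → ℝ) : ℕ → ℝ → (Idx r p → ℝ) → ℝ
  | 0 => u0fn B (AzMat a tb xb) T φ
  | n + 1 => fun t x =>
      ∫ s in t..T, ∫ ξ : Idx r p → ℝ, gauss B (AzMat a tb xb) t x s ξ *
        ∑ h ∈ Finset.range (n + 1),
          Kdiff B a aD tb xb ((h : ℤ) + 1) (useq B a aD tb xb T φ (n - h) s) s ξ
  termination_by n => n
  decreasing_by omega

/-- Nested integral of a composition of operators `G_{i_1}(t,s_1) ⋯ G_{i_h}(t,s_h)` applied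
to `u`, over the simplex `lo ≤ s_1 ≤ ⋯ ≤ s_h ≤ T`. -/
def Lrec (B A : Matrix (Idx r p) (Idx r p) ℝ)
    (a : Idx r p → Idx r p → ℝ → (Idx r p → ℝ) → ℝ)
    (aD : Idx r p → ℝ → (Idx r p → ℝ) → ℝ) (tb : ℝ) (xb : Idx r p → ℝ)
    (t T : ℝ) (u : (Idx r p → ℝ) → ℝ) : List ℕ → ℝ → (Idx r p → ℝ) → ℝ
  | [] => fun _ => u
  | m :: ms => fun lo x =>
      ∫ s in lo..T, Gop B A a aD tb xb (m : ℤ) t s (Lrec B A a aD tb xb t T u ms s) x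

/-- The operator `L_n(t,T,x) = Σ_{h=1}^n ∫_t^T ds_1 ⋯ ∫_{s_{h-1}}^T ds_h
Σ_{i_1+⋯+i_h=n, i_j ≥ 1} G_{i_1}(t,s_1) ⋯ G_{i_h}(t,s_h)`. -/
def Lop (B A : Matrix (Idx r p) (Idx r p) ℝ)
    (a : Idx r p → Idx r p → ℝ → (Idx r p → ℝ) → ℝ)
    (aD : Idx r p → ℝ → (Idx r p → ℝ) → ℝ) (tb : ℝ) (xb : Idx r p → ℝ)
    (n : ℕ) (t T : ℝ) (u : (Idx r p → ℝ) → ℝ) : (Idx r p → ℝ) → ℝ :=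
  fun x => ∑ h ∈ Finset.Icc 1 n,
    ∑ iv ∈ (Fintype.piFinset fun _ : Fin h => Finset.Icc 1 n).filter (fun iv => ∑ j, iv j = n),
      Lrec B A a aD tb xb t T u (List.ofFn iv) t x

/-- The dilation matrix `D₀(λ) = diag(λ^{σ_1}, …, λ^{σ_d})`. -/
def D0mat (r : ℕ) (p : Fin (r + 1) → ℕ) (lam : ℝ) : Matrix (Idx r p) (Idx r p) ℝ :=
  Matrix.diagonal fun j => lam ^ sigmaWt j

/-- The index set `J_n` of Lemma A.8. -/
def Jset (r : ℕ) (p : Fin (r + 1) → ℕ) (n : ℕ) :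
    Finset ((Idx r p → ℕ) × (Idx r p → ℕ)) :=
  ((Fintype.piFinset fun _ : Idx r p => Finset.range (3 * n + 1)) ×ˢ
    (Fintype.piFinset fun _ : Idx r p => Finset.range (n + 1))).filter
    fun q => 1 ≤ ∑ j, q.1 j ∧ ∑ j, q.1 j ≤ 3 * n ∧ bwt q.2 ≤ n ∧
      0 ≤ (bwt q.1 : ℤ) - (bwt q.2 : ℤ) + (n : ℤ)

/-- The index set of pairs `(δ, α)` with `|δ| + |α| ≤ |β|` and `|δ|_B - |α|_B ≤ |β|_B`. -/
def Sset (β : Idx r p → ℕ) : Finset ((Idx r p → ℕ) × (Idx r p → ℕ)) :=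
  ((Fintype.piFinset fun _ : Idx r p => Finset.range (∑ j, β j + 1)) ×ˢ
    (Fintype.piFinset fun _ : Idx r p => Finset.range (∑ j, β j + 1))).filter
    fun q => (∑ j, q.1 j) + (∑ j, q.2 j) ≤ ∑ j, β j ∧
      (bwt q.1 : ℤ) - (bwt q.2 : ℤ) ≤ (bwt β : ℤ)

/-- The index set of multi-indices `α` with `|α| = |β|` and `|α|_B ≥ |β|_B`. -/
def Wset (β : Idx r p → ℕ) : Finset (Idx r p → ℕ) :=
  (Fintype.piFinset fun _ : Idx r p => Finset.range (∑ j, β j + 1)).filter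
    fun α => ∑ j, α j = ∑ j, β j ∧ bwt β ≤ bwt α

namespace CovAux

variable {r : ℕ} {p : Fin (r + 1) → ℕ}

/-- Entries of powers of `B` vanish off the `n`-th subdiagonal blocks. -/
lemma pow_apply_zero (B : Matrix (Idx r p) (Idx r p) ℝ) (hB : IsKolB B) :
    ∀ (n : ℕ) (j k : Idx r p), (j.1 : ℕ) ≠ (k.1 : ℕ) + n → (B ^ n) j k = 0 := by
  intro n
  induction n with
  | zero =>
    intro j k hjk
    have : j ≠ k := by rintro rfl; omega
    simp [Matrix.one_apply, this]
  | succ n ih =>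
    intro j k hjk
    rw [pow_succ', Matrix.mul_apply]
    refine Finset.sum_eq_zero fun m _ => ?_
    by_cases h1 : (j.1 : ℕ) = (m.1 : ℕ) + 1
    · have : (m.1 : ℕ) ≠ (k.1 : ℕ) + n := by omega
      rw [ih m k this, mul_zero]
    · rw [hB.sparse j m h1, zero_mul]

lemma pow_zero_of_big (B : Matrix (Idx r p) (Idx r p) ℝ) (hB : IsKolB B)
    {n : ℕ} (hn : r + 1 ≤ n) : B ^ n = 0 := by
  ext j k
  exact pow_apply_zero B hB n j k (by have := j.1.isLt; have := k.1.isLt; omega)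

/-- The polynomial matrix equal to `e^{sB}`. -/
def Pm (B : Matrix (Idx r p) (Idx r p) ℝ) (s : ℝ) : Matrix (Idx r p) (Idx r p) ℝ :=
  ∑ n ∈ Finset.range (r + 1), (s ^ n / (n.factorial : ℝ)) • B ^ n

lemma mexp_eq (B : Matrix (Idx r p) (Idx r p) ℝ) (hB : IsKolB B) (s : ℝ) :
    mexp (s • B) = Pm B s := by
  ext j k
  show (∑' n : ℕ, (((n.factorial : ℝ))⁻¹ • (s • B) ^ n) j k) = _
  rw [tsum_eq_sum (s := Finset.range (r + 1)) ?h]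
  · simp only [Pm, Matrix.sum_apply, Matrix.smul_apply, smul_pow, smul_eq_mul, div_eq_mul_inv]
    exact Finset.sum_congr rfl fun n _ => by ring
  · intro n hn
    have : B ^ n = 0 := pow_zero_of_big B hB (by simpa using hn)
    simp [smul_pow, this]

/-- Reduce a sum over the sigma type to the group `i0` when the function is
supported there. -/
lemma sigma_sum_reduce (f : Idx r p → ℝ) (i0 : Fin (r + 1))
    (hf : ∀ j : Idx r p, j.1 ≠ i0 → f j = 0) :
    ∑ j, f j = ∑ a : Fin (p i0), f ⟨i0, a⟩ := by
  rw [← Finset.univ_sigma_univ, Finset.sum_sigma]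
  refine Finset.sum_eq_single i0 (fun i _ hi => Finset.sum_eq_zero fun a _ => hf ⟨i, a⟩ hi)
    (by simp)

lemma embed0_apply_00 (A₀ : Matrix (Fin (p 0)) (Fin (p 0)) ℝ) (a b : Fin (p 0)) :
    embed0 A₀ ⟨0, a⟩ ⟨0, b⟩ = A₀ a b := by
  show (if h : ((0 : Fin (r+1)) = 0 ∧ (0 : Fin (r+1)) = 0) then
      A₀ (Fin.cast (congrArg p h.1) a) (Fin.cast (congrArg p h.2) b) else 0) = A₀ a b
  rw [dif_pos ⟨rfl, rfl⟩]
  rfl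

lemma embed0_apply_ne {A₀ : Matrix (Fin (p 0)) (Fin (p 0)) ℝ} {j k : Idx r p}
    (h : ¬(j.1 = 0 ∧ k.1 = 0)) : embed0 A₀ j k = 0 := by
  show (if h : (j.1 = 0 ∧ k.1 = 0) then _ else 0) = 0
  rw [dif_neg h]

/-- Quadratic form of `embed0 A₀`. -/
lemma embed0_quad (A₀ : Matrix (Fin (p 0)) (Fin (p 0)) ℝ) (y : Idx r p → ℝ) :
    y ⬝ᵥ embed0 A₀ *ᵥ y =
      (fun a => y ⟨0, a⟩) ⬝ᵥ A₀ *ᵥ (fun a => y ⟨0, a⟩) := by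
  classical
  have hL : y ⬝ᵥ embed0 A₀ *ᵥ y = ∑ j, y j * ∑ k, embed0 A₀ j k * y k := by
    simp [dotProduct, Matrix.mulVec]
  rw [hL]
  rw [sigma_sum_reduce (fun j => y j * ∑ k, embed0 A₀ j k * y k) 0 ?hj]
  · have : ∀ a : Fin (p 0), (∑ k, embed0 A₀ ⟨0, a⟩ k * y k)
        = ∑ b : Fin (p 0), A₀ a b * y ⟨0, b⟩ := by
      intro a
      rw [sigma_sum_reduce (fun k => embed0 A₀ ⟨0, a⟩ k * y k) 0 ?hk]
      · exact Finset.sum_congr rfl fun b _ => by rw [embed0_apply_00]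
      · intro k hk
        show embed0 A₀ ⟨0, a⟩ k * y k = 0
        rw [embed0_apply_ne (by tauto), zero_mul]
    simp only [this]
    simp [dotProduct, Matrix.mulVec]
  · intro j hj
    have : ∀ k, embed0 A₀ j k * y k = 0 := fun k => by
      rw [embed0_apply_ne (by tauto), zero_mul]
    simp [this]

/-- The Kalman-type injectivity step. -/
lemma kalman_aux (B : Matrix (Idx r p) (Idx r p) ℝ) (hB : IsKolB B) :
    ∀ n, n ≤ r → ∀ v : Idx r p → ℝ, (∀ j : Idx r p, (j.1 : ℕ) ≠ n → v j = 0) →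
      (∀ a : Fin (p 0), (∑ k, (B ^ n) k ⟨0, a⟩ * v k) = 0) → v = 0 := by
  intro n
  induction n with
  | zero =>
    intro _ v hsupp h0
    have h0' : ∀ a : Fin (p 0), v ⟨0, a⟩ = 0 := by
      intro a
      have := h0 a
      simpa [Matrix.one_apply] using this
    funext j
    obtain ⟨i, b⟩ := j
    by_cases hi : (i : ℕ) = 0
    · have : i = 0 := Fin.ext (by simpa using hi)
      subst this
      exact h0' b
    · exact hsupp ⟨i, b⟩ hi
  | succ n ih =>
    intro hn v hsupp h0
    set w : Idx r p → ℝ := fun j => ∑ k, B k j * v k with hw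
    have hwsupp : ∀ j : Idx r p, (j.1 : ℕ) ≠ n → w j = 0 := by
      intro j hj
      refine Finset.sum_eq_zero fun k _ => ?_
      by_cases hk : (k.1 : ℕ) = n + 1
      · rw [hB.sparse k j (by omega), zero_mul]
      · rw [hsupp k hk, mul_zero]
    have hw0 : ∀ a : Fin (p 0), (∑ k, (B ^ n) k ⟨0, a⟩ * w k) = 0 := by
      intro a
      have : (∑ k, (B ^ n) k ⟨0, a⟩ * w k)
          = ∑ m, (B ^ (n + 1)) m ⟨0, a⟩ * v m := by
        simp only [hw, Finset.mul_sum]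
        rw [Finset.sum_comm]
        refine Finset.sum_congr rfl fun m _ => ?_
        rw [pow_succ', Matrix.mul_apply, Finset.sum_mul]
        exact Finset.sum_congr rfl fun k _ => by ring
      rw [this, h0 a]
    have hwz : w = 0 := ih (by omega) w hwsupp hw0
    -- now use the rank condition on the block `B_{n+1}`
    have hn1 : n + 1 < r + 1 := by omega
    have hn0 : n < r + 1 := by omega
    set i' : Fin (r + 1) := ⟨n + 1, hn1⟩ with hi'
    set k' : Fin (r + 1) := ⟨n, hn0⟩ with hk'
    set M : Matrix (Fin (p i')) (Fin (p k')) ℝ :=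
      Matrix.of fun a b => B ⟨i', a⟩ ⟨k', b⟩ with hM
    have hrank : M.rank = p i' := hB.rk i' k' rfl
    have hli : LinearIndependent ℝ (fun a => M a) := by
      rw [linearIndependent_iff_card_eq_finrank_span]
      rw [Set.finrank, show (fun a => M a) = M.row from rfl, ← Matrix.rank_eq_finrank_span_row, hrank, Fintype.card_fin]
    have hinj : Function.Injective M.vecMul := Matrix.vecMul_injective_iff.mpr hli
    set u : Fin (p i') → ℝ := fun a => v ⟨i', a⟩ with hu
    have huz : u = 0 := by
      have hvM : u ᵥ* M = 0 := by
        funext b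
        have hcol : (∑ k, B k ⟨k', b⟩ * v k) = 0 := by
          have h3 : w ⟨k', b⟩ = 0 := by rw [hwz]; rfl
          exact h3
        rw [sigma_sum_reduce (fun k => B k ⟨k', b⟩ * v k) i' ?hsup] at hcol
        · simpa [Matrix.vecMul, dotProduct, hM, hu, mul_comm] using hcol
        · intro j hj
          show B j ⟨k', b⟩ * v j = 0
          have : (j.1 : ℕ) ≠ n + 1 := fun hc => hj (Fin.ext (by simpa [hi'] using hc))
          rw [hsupp j this, mul_zero]
      have := hinj (hvM.trans (Matrix.zero_vecMul M).symm)
      exact this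
    funext j
    obtain ⟨i, b⟩ := j
    by_cases hi : (i : ℕ) = n + 1
    · have hieq : i = i' := Fin.ext (by simpa [hi'] using hi)
      subst hieq
      exact congrFun huz b
    · exact hsupp ⟨i, b⟩ hi

/-- The full Kalman condition: if all the observability coefficients vanish, `x = 0`. -/
lemma kalman (B : Matrix (Idx r p) (Idx r p) ℝ) (hB : IsKolB B) (x : Idx r p → ℝ)
    (h : ∀ n ∈ Finset.range (r + 1), ∀ a : Fin (p 0),
      (∑ k, (B ^ n) k ⟨0, a⟩ * x k) = 0) : x = 0 := by
  funext j
  obtain ⟨i, b⟩ := j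
  set n : ℕ := (i : ℕ) with hn
  have hnr : n ≤ r := by have := i.isLt; omega
  set v : Idx r p → ℝ := fun j => if (j.1 : ℕ) = n then x j else 0 with hv
  have hvsupp : ∀ j : Idx r p, (j.1 : ℕ) ≠ n → v j = 0 := by
    intro j hj; simp [hv, hj]
  have hv0 : ∀ a : Fin (p 0), (∑ k, (B ^ n) k ⟨0, a⟩ * v k) = 0 := by
    intro a
    have : (∑ k, (B ^ n) k ⟨0, a⟩ * v k) = ∑ k, (B ^ n) k ⟨0, a⟩ * x k := by
      refine Finset.sum_congr rfl fun k _ => ?_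
      by_cases hk : (k.1 : ℕ) = n
      · simp [hv, hk]
      · rw [pow_apply_zero B hB n k ⟨0, a⟩ (by simpa using hk), zero_mul, zero_mul]
    rw [this]
    exact h n (Finset.mem_range.mpr (by omega)) a
  have := kalman_aux B hB n hnr v hvsupp hv0
  have hvj : v ⟨i, b⟩ = x ⟨i, b⟩ := by simp [hv, hn]
  rw [← hvj, this]

/-- A real polynomial (given by coefficients) vanishing on `Ioo 0 t` has zero coefficients. -/
lemma poly_vanish {m : ℕ} (c : ℕ → ℝ) {t : ℝ} (ht : 0 < t)
    (h : ∀ s ∈ Set.Ioo (0 : ℝ) t, (∑ n ∈ Finset.range m, c n * s ^ n) = 0) :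
    ∀ n ∈ Finset.range m, c n = 0 := by
  classical
  set P : Polynomial ℝ := ∑ n ∈ Finset.range m, Polynomial.C (c n) * Polynomial.X ^ n with hP
  have hev : ∀ s : ℝ, P.eval s = ∑ n ∈ Finset.range m, c n * s ^ n := by
    intro s; simp [hP, Polynomial.eval_finset_sum]
  have hzero : P = 0 := by
    refine Polynomial.eq_zero_of_infinite_isRoot P ?_
    refine Set.Infinite.mono ?_ (Set.Ioo_infinite ht)
    intro s hs
    simp only [Set.mem_setOf_eq, Polynomial.IsRoot, hev]
    exact h s hs
  intro n hn
  have : P.coeff n = c n := by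
    rw [hP, Polynomial.finset_sum_coeff]
    simp only [Polynomial.coeff_C_mul, Polynomial.coeff_X_pow]
    rw [Finset.sum_eq_single n (fun b _ hb => by simp [Ne.symm hb]) (by intro hnn; exact absurd hn hnn)]
    simp
  rw [hzero] at this
  simpa using this.symm

end CovAux

/-- Under the block structure assumption on `B` and positive definiteness of
`A₀`, the covariance matrix `C(t) = ∫_0^t e^{sB} A e^{sBᵀ} ds` is symmetric positive definite
for every `t > 0`. -/
theorem covMat_posDef {r : ℕ} {p : Fin (r + 1) → ℕ}
    (B : Matrix (Idx r p) (Idx r p) ℝ) (hB : IsKolB B)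
    (A₀ : Matrix (Fin (p 0)) (Fin (p 0)) ℝ) (hA₀ : A₀.PosDef)
    {t : ℝ} (ht : 0 < t) :
    (covMat B (embed0 A₀) t).PosDef := by
  classical
  set A : Matrix (Idx r p) (Idx r p) ℝ := embed0 A₀ with hA
  set Qm : ℝ → Matrix (Idx r p) (Idx r p) ℝ :=
    fun s => CovAux.Pm B s * A * (CovAux.Pm B s)ᵀ with hQm
  have hQc : ∀ j k : Idx r p, Continuous fun s => Qm s j k := by
    intro j k
    simp only [hQm, Matrix.mul_apply, Matrix.transpose_apply, CovAux.Pm, Matrix.sum_apply,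
      Matrix.smul_apply, smul_eq_mul]
    fun_prop
  have hcov : ∀ j k : Idx r p, covMat B A t j k = ∫ s in (0:ℝ)..t, Qm s j k := by
    intro j k
    show (∫ s in (0:ℝ)..t, (mexp (s • B) * A * (mexp (s • B))ᵀ) j k) = _
    refine intervalIntegral.integral_congr fun s _ => ?_
    rw [CovAux.mexp_eq B hB]
  have hA₀symm : ∀ a b : Fin (p 0), A₀ b a = A₀ a b := by
    intro a b
    conv_rhs => rw [← hA₀.1]
    simp [Matrix.conjTranspose_apply]
  have hAsymm : Aᵀ = A := by
    rw [hA]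
    ext j k
    show embed0 A₀ k j = embed0 A₀ j k
    obtain ⟨i1, a1⟩ := j; obtain ⟨i2, a2⟩ := k
    by_cases h1 : i1 = 0
    · by_cases h2 : i2 = 0
      · subst h1; subst h2
        rw [CovAux.embed0_apply_00, CovAux.embed0_apply_00, hA₀symm]
      · rw [CovAux.embed0_apply_ne (fun hc => h2 hc.1),
          CovAux.embed0_apply_ne (fun hc => h2 hc.2)]
    · rw [CovAux.embed0_apply_ne (fun hc => h1 hc.2),
        CovAux.embed0_apply_ne (fun hc => h1 hc.1)]
  have hQsymm : ∀ (s : ℝ) (j k : Idx r p), Qm s k j = Qm s j k := by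
    intro s j k
    have h : (Qm s)ᵀ = Qm s := by
      show (CovAux.Pm B s * A * (CovAux.Pm B s)ᵀ)ᵀ = CovAux.Pm B s * A * (CovAux.Pm B s)ᵀ
      rw [Matrix.transpose_mul, Matrix.transpose_mul, Matrix.transpose_transpose, hAsymm,
        Matrix.mul_assoc]
    exact congrFun (congrFun h j) k
  rw [Matrix.posDef_iff_dotProduct_mulVec]
  constructor
  · show (covMat B A t)ᴴ = covMat B A t
    ext j k
    rw [Matrix.conjTranspose_apply, star_trivial, hcov, hcov]
    exact intervalIntegral.integral_congr fun s _ => hQsymm s j k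
  · intro x hx
    have hstar : star x = x := funext fun i => star_trivial _
    rw [hstar]
    -- the quadratic form as an integral
    have h1 : ∀ s : ℝ, x ⬝ᵥ Qm s *ᵥ x = ∑ j, ∑ k, x j * (Qm s j k * x k) := by
      intro s
      simp [dotProduct, Matrix.mulVec, Finset.mul_sum]
    have hqcont : Continuous fun s => x ⬝ᵥ Qm s *ᵥ x := by
      have : (fun s => x ⬝ᵥ Qm s *ᵥ x) = fun s => ∑ j, ∑ k, x j * (Qm s j k * x k) :=
        funext h1
      rw [this]
      exact continuous_finset_sum _ fun j _ => continuous_finset_sum _ fun k _ =>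
        continuous_const.mul ((hQc j k).mul continuous_const)
    have hR : (∫ s in (0:ℝ)..t, x ⬝ᵥ Qm s *ᵥ x)
        = ∑ j, ∑ k, x j * ((∫ s in (0:ℝ)..t, Qm s j k) * x k) := by
      rw [intervalIntegral.integral_congr (g := fun s => ∑ j, ∑ k, x j * (Qm s j k * x k))
        (fun s _ => h1 s)]
      rw [intervalIntegral.integral_finset_sum (f := fun j s => ∑ k, x j * (Qm s j k * x k)) (fun j _ =>
        (continuous_finset_sum _ fun k _ =>
          continuous_const.mul ((hQc j k).mul continuous_const)).intervalIntegrable _ _)]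
      refine Finset.sum_congr rfl fun j _ => ?_
      rw [intervalIntegral.integral_finset_sum (f := fun k s => x j * (Qm s j k * x k)) (fun k _ =>
        (continuous_const.mul ((hQc j k).mul continuous_const)).intervalIntegrable _ _)]
      refine Finset.sum_congr rfl fun k _ => ?_
      rw [intervalIntegral.integral_const_mul, intervalIntegral.integral_mul_const]
    have hqint : x ⬝ᵥ covMat B A t *ᵥ x = ∫ s in (0:ℝ)..t, x ⬝ᵥ Qm s *ᵥ x := by
      rw [hR]
      simp [dotProduct, Matrix.mulVec, hcov, Finset.mul_sum]
    -- the quadratic form of `Qm s` via the vector `yv s`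
    set yv : ℝ → Idx r p → ℝ := fun s => (CovAux.Pm B s)ᵀ *ᵥ x with hyv
    have hyq : ∀ s : ℝ, x ⬝ᵥ Qm s *ᵥ x = yv s ⬝ᵥ A *ᵥ yv s := by
      intro s
      have e1 : Qm s *ᵥ x = CovAux.Pm B s *ᵥ (A *ᵥ yv s) := by
        rw [hyv, Matrix.mulVec_mulVec, Matrix.mulVec_mulVec]
      rw [e1, dotProduct_mulVec, ← Matrix.mulVec_transpose]
    have hq0 : ∀ s : ℝ, 0 ≤ x ⬝ᵥ Qm s *ᵥ x := by
      intro s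
      rw [hyq s, hA, CovAux.embed0_quad]
      have := hA₀.posSemidef.dotProduct_mulVec_nonneg (fun a => yv s ⟨0, a⟩)
      simpa using this
    -- yv as a polynomial in s
    have hyvpoly : ∀ (s : ℝ) (j : Idx r p), yv s j
        = ∑ n ∈ Finset.range (r + 1), (s ^ n / (n.factorial : ℝ)) *
            (∑ k, (B ^ n) k j * x k) := by
      intro s j
      show ((CovAux.Pm B s)ᵀ *ᵥ x) j = _
      simp only [Matrix.mulVec, dotProduct, Matrix.transpose_apply, CovAux.Pm,
        Matrix.sum_apply, Matrix.smul_apply, smul_eq_mul, Finset.sum_mul, Finset.mul_sum,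
        mul_assoc]
      rw [Finset.sum_comm]
    -- existence of a point of positivity
    have hex : ∃ s₀ ∈ Set.Ioo (0:ℝ) t, 0 < x ⬝ᵥ Qm s₀ *ᵥ x := by
      by_contra hcon
      push_neg at hcon
      have hy0 : ∀ s ∈ Set.Ioo (0:ℝ) t, (fun a => yv s ⟨0, a⟩) = 0 := by
        intro s hs
        by_contra hne
        have hpos := hA₀.dotProduct_mulVec_pos hne
        have hsz : star (fun a => yv s ⟨0, a⟩) = fun a => yv s ⟨0, a⟩ :=
          funext fun i => star_trivial _
        rw [hsz] at hpos
        have he : x ⬝ᵥ Qm s *ᵥ x = (fun a => yv s ⟨0, a⟩) ⬝ᵥ A₀ *ᵥ (fun a => yv s ⟨0, a⟩) := by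
          rw [hyq s, hA, CovAux.embed0_quad]
        have := hcon s hs
        rw [he] at this
        exact absurd hpos (not_lt.mpr this)
      have hcoef : ∀ n ∈ Finset.range (r + 1), ∀ a : Fin (p 0),
          (∑ k, (B ^ n) k ⟨0, a⟩ * x k) = 0 := by
        intro n hn a
        have hpoly : ∀ s ∈ Set.Ioo (0:ℝ) t,
            (∑ m ∈ Finset.range (r + 1),
              ((∑ k, (B ^ m) k ⟨0, a⟩ * x k) / (m.factorial : ℝ)) * s ^ m) = 0 := by
          intro s hs
          have h2 : yv s ⟨0, a⟩ = 0 := congrFun (hy0 s hs) a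
          rw [hyvpoly s ⟨0, a⟩] at h2
          rw [← h2]
          exact Finset.sum_congr rfl fun m _ => by ring
        have := CovAux.poly_vanish
          (fun m => (∑ k, (B ^ m) k ⟨0, a⟩ * x k) / (m.factorial : ℝ)) ht hpoly n hn
        have hfac : ((n.factorial : ℝ)) ≠ 0 := Nat.cast_ne_zero.mpr n.factorial_ne_zero
        field_simp at this
        simpa using this
      exact hx (CovAux.kalman B hB x hcoef)
    obtain ⟨s₀, hs₀, hpos⟩ := hex
    rw [hqint, intervalIntegral.integral_of_le ht.le]
    refine (MeasureTheory.setIntegral_pos_iff_support_of_nonneg_ae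
      (MeasureTheory.ae_of_all _ fun s => hq0 s) ?_).mpr ?_
    · exact hqcont.integrableOn_Ioc
    · have hUopen : IsOpen (((fun s => x ⬝ᵥ Qm s *ᵥ x) ⁻¹' Set.Ioi (0:ℝ)) ∩ Set.Ioo 0 t) :=
        (isOpen_Ioi.preimage hqcont).inter isOpen_Ioo
      have hne : (((fun s => x ⬝ᵥ Qm s *ᵥ x) ⁻¹' Set.Ioi (0:ℝ)) ∩ Set.Ioo 0 t).Nonempty :=
        ⟨s₀, hpos, hs₀⟩
      have hsub : ((fun s => x ⬝ᵥ Qm s *ᵥ x) ⁻¹' Set.Ioi (0:ℝ)) ∩ Set.Ioo 0 t ⊆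
          Function.support (fun s => x ⬝ᵥ Qm s *ᵥ x) ∩ Set.Ioc 0 t := by
        rintro s ⟨hU, hIoo⟩
        exact ⟨ne_of_gt hU, Set.Ioo_subset_Ioc_self hIoo⟩
      calc (0 : ENNReal) < volume (((fun s => x ⬝ᵥ Qm s *ᵥ x) ⁻¹' Set.Ioi (0:ℝ)) ∩ Set.Ioo 0 t) :=
            hUopen.measure_pos volume hne
        _ ≤ _ := measure_mono hsub

end
end

section
/- The components of the operator M(s-t,x) commute when applied to derivatives of the Gaussian kernel: for all i, j ∈ {1,...,d}, every multi-index β ∈ ℕ_0^d, all t < s and x, y ∈ ℝ^d, M_i(s-t,x) M_j(s-t,x) D_x^β Γ_0(t,x;s,y) = M_j(s-t,x) M_i(s-t,x) D_x^β Γ_0(t,x;s,y). -/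
open MeasureTheory Matrix Finset

noncomputable section

variable {r : ℕ} {p : Fin (r + 1) → ℕ}

section MopComm

private lemma contDiff_pdx {f : (Idx r p → ℝ) → ℝ} (hf : ContDiff ℝ (⊤:ℕ∞) f) (i : Idx r p) :
    ContDiff ℝ (⊤:ℕ∞) (pdx i f) := by
  unfold pdx
  have h1 : ContDiff ℝ (⊤:ℕ∞) (fderiv ℝ f) := hf.fderiv_right (m := (⊤:ℕ∞)) (by simp)
  exact (ContinuousLinearMap.apply ℝ ℝ (Pi.single i 1)).contDiff.comp h1

private lemma contDiff_pdx_iter {f : (Idx r p → ℝ) → ℝ} (hf : ContDiff ℝ (⊤:ℕ∞) f) (i : Idx r p)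
    (n : ℕ) : ContDiff ℝ (⊤:ℕ∞) ((pdx i)^[n] f) := by
  induction n generalizing f with
  | zero => exact hf
  | succ n ih => rw [Function.iterate_succ_apply]; exact ih (contDiff_pdx hf i)

private lemma contDiff_Dx {f : (Idx r p → ℝ) → ℝ} (hf : ContDiff ℝ (⊤:ℕ∞) f) (β : Idx r p → ℕ) :
    ContDiff ℝ (⊤:ℕ∞) (Dx β f) := by
  unfold Dx
  induction (Finset.univ (α := Idx r p)).toList with
  | nil => exact hf
  | cons a l ih => exact contDiff_pdx_iter ih a (β a)

private lemma contDiff_gauss (B A : Matrix (Idx r p) (Idx r p) ℝ) (t s : ℝ) (y : Idx r p → ℝ) :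
    ContDiff ℝ (⊤:ℕ∞) (fun x => gauss B A t x s y) := by
  unfold gauss
  apply ContDiff.mul contDiff_const
  apply Real.contDiff_exp.comp
  apply ContDiff.mul contDiff_const
  have hv : ContDiff ℝ (⊤:ℕ∞) fun x : Idx r p → ℝ => y - mexp ((s - t) • B) *ᵥ x := by
    refine contDiff_const.sub ?_
    exact (LinearMap.toContinuousLinearMap
      (Matrix.mulVecLin (mexp ((s - t) • B)))).contDiff
  have hw : ContDiff ℝ (⊤:ℕ∞) fun x : Idx r p → ℝ =>
      (covMat B A (s - t))⁻¹ *ᵥ (y - mexp ((s - t) • B) *ᵥ x) :=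
    ((LinearMap.toContinuousLinearMap
      (Matrix.mulVecLin (covMat B A (s - t))⁻¹)).contDiff).comp hv
  show ContDiff ℝ (⊤:ℕ∞) fun x : Idx r p → ℝ =>
    ∑ k, ((covMat B A (s - t))⁻¹ *ᵥ (y - mexp ((s - t) • B) *ᵥ x)) k *
      (y - mexp ((s - t) • B) *ᵥ x) k
  have hproj : ∀ k : Idx r p, ContDiff ℝ (⊤:ℕ∞) (fun v : Idx r p → ℝ => v k) := fun k =>
    (ContinuousLinearMap.proj (R := ℝ) (φ := fun _ : Idx r p => ℝ) k).contDiff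
  exact ContDiff.sum fun k _ => ((hproj k).comp hw).mul ((hproj k).comp hv)

private lemma pdx_comm {f : (Idx r p → ℝ) → ℝ} (hf : ContDiff ℝ (⊤:ℕ∞) f) (i j : Idx r p)
    (x : Idx r p → ℝ) : pdx i (pdx j f) x = pdx j (pdx i f) x := by
  have hdf : ContDiff ℝ (⊤:ℕ∞) (fderiv ℝ f) := hf.fderiv_right (m := (⊤:ℕ∞)) (by simp)
  have hD : ∀ z, DifferentiableAt ℝ (fderiv ℝ f) z :=
    fun z => (hdf.differentiable (by simp)) z
  have key : ∀ (v w : Idx r p → ℝ),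
      fderiv ℝ (fun z => fderiv ℝ f z v) x w = fderiv ℝ (fderiv ℝ f) x w v := by
    intro v w
    have h : HasFDerivAt (fun z => fderiv ℝ f z v)
        ((ContinuousLinearMap.apply ℝ ℝ v).comp (fderiv ℝ (fderiv ℝ f) x)) x :=
      ((ContinuousLinearMap.apply ℝ ℝ v).hasFDerivAt).comp x (hD x).hasFDerivAt
    rw [h.fderiv]; rfl
  have hsymm := second_derivative_symmetric
    (f' := fderiv ℝ f) (f'' := fderiv ℝ (fderiv ℝ f) x) (x := x)
    (fun z => ((hf.differentiable (by simp)) z).hasFDerivAt) (hD x).hasFDerivAt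
  show fderiv ℝ (pdx j f) x (Pi.single i 1) = fderiv ℝ (pdx i f) x (Pi.single j 1)
  unfold pdx
  rw [key, key, hsymm]

private lemma Mop_apply (B A : Matrix (Idx r p) (Idx r p) ℝ) (τ : ℝ) (i : Idx r p)
    (f : (Idx r p → ℝ) → ℝ) (x : Idx r p → ℝ) :
    Mop B A τ i f x = (mexp (τ • B) *ᵥ x) i * f x
      + ∑ k, (mexp (τ • B) * Mbar B A τ) i k * pdx k f x := by
  unfold Mop
  simp [Matrix.mulVec, dotProduct]

private def clmE (E : Matrix (Idx r p) (Idx r p) ℝ) (j : Idx r p) : (Idx r p → ℝ) →L[ℝ] ℝ :=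
  LinearMap.toContinuousLinearMap ((LinearMap.proj j).comp E.mulVecLin)

private lemma clmE_apply (E : Matrix (Idx r p) (Idx r p) ℝ) (j : Idx r p) (v : Idx r p → ℝ) :
    clmE E j v = (E *ᵥ v) j := rfl

private lemma hasFDerivAt_EmulVec (E : Matrix (Idx r p) (Idx r p) ℝ) (j : Idx r p)
    (x : Idx r p → ℝ) : HasFDerivAt (fun x : Idx r p → ℝ => (E *ᵥ x) j) (clmE E j) x :=
  (clmE E j).hasFDerivAt

private lemma pdx_Mop (B A : Matrix (Idx r p) (Idx r p) ℝ) (τ : ℝ) (j k : Idx r p)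
    {f : (Idx r p → ℝ) → ℝ} (hf : ContDiff ℝ (⊤:ℕ∞) f) (x : Idx r p → ℝ) :
    pdx k (Mop B A τ j f) x =
      (mexp (τ • B)) j k * f x + (mexp (τ • B) *ᵥ x) j * pdx k f x
        + ∑ l, (mexp (τ • B) * Mbar B A τ) j l * pdx k (pdx l f) x := by
  set E := mexp (τ • B) with hE
  set Q := mexp (τ • B) * Mbar B A τ with hQ
  have hMf : Mop B A τ j f = fun x => (E *ᵥ x) j * f x + ∑ l, Q j l * pdx l f x :=
    funext fun x => Mop_apply B A τ j f x
  have h1 : HasFDerivAt (fun x => (E *ᵥ x) j * f x)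
      ((E *ᵥ x) j • fderiv ℝ f x + f x • clmE E j) x :=
    (hasFDerivAt_EmulVec E j x).mul ((hf.differentiable (by simp)) x).hasFDerivAt
  have h2 : HasFDerivAt (fun x => ∑ l, Q j l * pdx l f x)
      (∑ l, Q j l • fderiv ℝ (pdx l f) x) x := by
    apply HasFDerivAt.fun_sum
    intro l _
    exact (((contDiff_pdx hf l).differentiable (by simp)) x).hasFDerivAt.const_mul (Q j l)
  have h := h1.fun_add h2
  show fderiv ℝ (Mop B A τ j f) x (Pi.single k 1) = _
  rw [hMf, h.fderiv]
  simp only [ContinuousLinearMap.add_apply, ContinuousLinearMap.smul_apply,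
    ContinuousLinearMap.sum_apply, smul_eq_mul]
  have hcl : clmE E j (Pi.single k 1) = E j k := by
    rw [clmE_apply, Matrix.mulVec_single]; simp
  rw [hcl]
  show (E *ᵥ x) j * pdx k f x + f x * E j k + ∑ l, Q j l * pdx k (pdx l f) x = _
  ring

private lemma Mop_Mop_expand (B A : Matrix (Idx r p) (Idx r p) ℝ) (τ : ℝ) (i j : Idx r p)
    {f : (Idx r p → ℝ) → ℝ} (hf : ContDiff ℝ (⊤:ℕ∞) f) (x : Idx r p → ℝ) :
    Mop B A τ i (Mop B A τ j f) x =
      (mexp (τ • B) *ᵥ x) i * (mexp (τ • B) *ᵥ x) j * f x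
      + (mexp (τ • B) *ᵥ x) i * ∑ l, (mexp (τ • B) * Mbar B A τ) j l * pdx l f x
      + (∑ k, (mexp (τ • B) * Mbar B A τ) i k * (mexp (τ • B)) j k) * f x
      + (mexp (τ • B) *ᵥ x) j * ∑ k, (mexp (τ • B) * Mbar B A τ) i k * pdx k f x
      + ∑ k, ∑ l, (mexp (τ • B) * Mbar B A τ) i k * (mexp (τ • B) * Mbar B A τ) j l *
          pdx k (pdx l f) x := by
  set E := mexp (τ • B) with hE
  set Q := mexp (τ • B) * Mbar B A τ with hQ
  rw [Mop_apply, Mop_apply, ← hQ, ← hE]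
  have hsum : ∀ k ∈ (Finset.univ : Finset (Idx r p)), Q i k * pdx k (Mop B A τ j f) x
      = Q i k * E j k * f x + (E *ᵥ x) j * (Q i k * pdx k f x)
        + ∑ l, Q i k * Q j l * pdx k (pdx l f) x := by
    intro k _
    rw [pdx_Mop B A τ j k hf x, ← hQ, ← hE, mul_add, mul_add, Finset.mul_sum]
    rw [show Q i k * (E j k * f x) = Q i k * E j k * f x from by ring,
      show Q i k * ((E *ᵥ x) j * pdx k f x) = (E *ᵥ x) j * (Q i k * pdx k f x) from by ring]
    exact congrArg _ (Finset.sum_congr rfl fun l _ => by ring)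
  rw [Finset.sum_congr rfl hsum]
  simp only [Finset.sum_add_distrib, ← Finset.mul_sum, ← Finset.sum_mul]
  ring

private lemma covMat_symm (B A : Matrix (Idx r p) (Idx r p) ℝ) (hA : Aᵀ = A) (τ : ℝ) :
    (covMat B A τ)ᵀ = covMat B A τ := by
  ext j k
  show covMat B A τ k j = covMat B A τ j k
  unfold covMat
  simp only [Matrix.of_apply]
  have hpt : ∀ s' : ℝ, (mexp (s' • B) * A * (mexp (s' • B))ᵀ) k j
      = (mexp (s' • B) * A * (mexp (s' • B))ᵀ) j k := by
    intro s'
    have hT : (mexp (s' • B) * A * (mexp (s' • B))ᵀ)ᵀ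
        = mexp (s' • B) * A * (mexp (s' • B))ᵀ := by
      rw [Matrix.transpose_mul, Matrix.transpose_mul, Matrix.transpose_transpose, hA,
        ← Matrix.mul_assoc]
    conv_lhs => rw [← hT]
    rw [Matrix.transpose_apply]
  simp only [hpt]

private lemma Mbar_symm (B A : Matrix (Idx r p) (Idx r p) ℝ) (hA : Aᵀ = A) (τ : ℝ) :
    (Mbar B A τ)ᵀ = Mbar B A τ := by
  unfold Mbar
  rw [Matrix.transpose_mul, Matrix.transpose_mul, Matrix.transpose_transpose,
    covMat_symm B A hA, ← Matrix.mul_assoc]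

private lemma embed0_symm (A₀ : Matrix (Fin (p 0)) (Fin (p 0)) ℝ)
    (h : ∀ a b, A₀ a b = A₀ b a) : (embed0 (r := r) A₀)ᵀ = embed0 A₀ := by
  ext j k
  show embed0 A₀ k j = embed0 A₀ j k
  unfold embed0
  simp only [Matrix.of_apply]
  by_cases h1 : j.1 = 0 <;> by_cases h2 : k.1 = 0
  · rw [dif_pos ⟨h2, h1⟩, dif_pos ⟨h1, h2⟩]; exact h _ _
  · rw [dif_neg (by tauto), dif_neg (by tauto)]
  · rw [dif_neg (by tauto), dif_neg (by tauto)]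
  · rw [dif_neg (by tauto), dif_neg (by tauto)]

private lemma QE_symm (B A : Matrix (Idx r p) (Idx r p) ℝ) (hA : Aᵀ = A) (τ : ℝ)
    (i j : Idx r p) :
    ∑ k, (mexp (τ • B) * Mbar B A τ) i k * (mexp (τ • B)) j k
      = ∑ k, (mexp (τ • B) * Mbar B A τ) j k * (mexp (τ • B)) i k := by
  set E := mexp (τ • B) with hE
  set Q := mexp (τ • B) * Mbar B A τ with hQ
  have hQE : (Q * Eᵀ)ᵀ = Q * Eᵀ := by
    rw [hQ, hE, Matrix.transpose_mul, Matrix.transpose_mul, Matrix.transpose_transpose,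
      Mbar_symm B A hA, ← Matrix.mul_assoc]
  have h1 : ∀ a b : Idx r p, (Q * Eᵀ) a b = ∑ k, Q a k * E b k := by
    intro a b
    rw [Matrix.mul_apply]
    exact Finset.sum_congr rfl fun k _ => by rw [Matrix.transpose_apply]
  rw [← h1, ← h1]
  conv_lhs => rw [← hQE]
  rw [Matrix.transpose_apply]

end MopComm


/-- The components of the operator `M(s-t,x)` commute when applied to
derivatives of the Gaussian kernel: for all `i, j`, every multi-index `β`, all `t < s`
and `x, y`, `M_i M_j D^β Γ₀ = M_j M_i D^β Γ₀`. -/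
theorem Mop_comm_on_gauss {r : ℕ} {p : Fin (r + 1) → ℕ}
    (B : Matrix (Idx r p) (Idx r p) ℝ) (hB : IsKolB B)
    (A₀ : Matrix (Fin (p 0)) (Fin (p 0)) ℝ) (hA₀ : A₀.PosDef)
    (i j : Idx r p) (β : Idx r p → ℕ)
    (t s : ℝ) (hts : t < s) (x y : Idx r p → ℝ) :
    Mop B (embed0 A₀) (s - t) i
        (Mop B (embed0 A₀) (s - t) j (Dx β (fun x' => gauss B (embed0 A₀) t x' s y))) x
      = Mop B (embed0 A₀) (s - t) j
          (Mop B (embed0 A₀) (s - t) i (Dx β (fun x' => gauss B (embed0 A₀) t x' s y))) x := by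
  have hA₀s : ∀ a b, A₀ a b = A₀ b a := fun a b => by
    conv_lhs => rw [← hA₀.1.eq]
    simp [Matrix.conjTranspose_apply]
  have hA : (embed0 (r := r) A₀)ᵀ = embed0 A₀ := embed0_symm A₀ hA₀s
  have hf : ContDiff ℝ (⊤:ℕ∞) (Dx β (fun x' => gauss B (embed0 A₀) t x' s y)) :=
    contDiff_Dx (contDiff_gauss B (embed0 A₀) t s y) β
  set f := Dx β (fun x' => gauss B (embed0 A₀) t x' s y) with hfdef
  rw [Mop_Mop_expand B (embed0 A₀) (s - t) i j hf x,
      Mop_Mop_expand B (embed0 A₀) (s - t) j i hf x]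
  rw [QE_symm B (embed0 A₀) hA (s - t) i j]
  have hdouble : ∑ k, ∑ l, (mexp ((s - t) • B) * Mbar B (embed0 A₀) (s - t)) i k *
        (mexp ((s - t) • B) * Mbar B (embed0 A₀) (s - t)) j l * pdx k (pdx l f) x
      = ∑ k, ∑ l, (mexp ((s - t) • B) * Mbar B (embed0 A₀) (s - t)) j k *
        (mexp ((s - t) • B) * Mbar B (embed0 A₀) (s - t)) i l * pdx k (pdx l f) x := by
    rw [Finset.sum_comm]
    exact Finset.sum_congr rfl fun k _ => Finset.sum_congr rfl fun l _ => by
      rw [pdx_comm hf l k x]; ring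
  rw [hdouble]
  ring

end
end

section
/- The following homogeneity relations hold for every t > 0: C(t) = D_0(√t) C(1) D_0(√t); M̄(t) = D_0(√t) M̄(1) D_0(√t); and e^{tB} = D_0(√t) e^{B} D_0(1/√t). -/
open MeasureTheory Matrix Finset

noncomputable section

variable {r : ℕ} {p : Fin (r + 1) → ℕ}

section Aux

variable {r : ℕ} {p : Fin (r + 1) → ℕ}

lemma D0mat_mul_D0mat (lam mu : ℝ) :
    D0mat r p lam * D0mat r p mu = Matrix.diagonal (fun j => (lam * mu) ^ sigmaWt j) := by
  simp [D0mat, Matrix.diagonal_mul_diagonal, mul_pow]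

lemma D0mat_mul_inv (lam : ℝ) (h : lam ≠ 0) :
    D0mat r p lam * D0mat r p (1 / lam) = 1 := by
  rw [D0mat_mul_D0mat, mul_one_div_cancel h]
  simp

lemma D0mat_inv_mul (lam : ℝ) (h : lam ≠ 0) :
    D0mat r p (1 / lam) * D0mat r p lam = 1 := by
  rw [D0mat_mul_D0mat, one_div_mul_cancel h]
  simp

lemma kolConjPow (D D' M : Matrix (Idx r p) (Idx r p) ℝ)
    (h1 : D * D' = 1) (h2 : D' * D = 1) (n : ℕ) :
    (D * M * D') ^ n = D * M ^ n * D' := by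
  induction n with
  | zero => simp [h1]
  | succ n ih =>
      have hstep : D * M ^ n * D' * (D * M * D') = D * M ^ n * (D' * D) * (M * D') := by
        simp only [Matrix.mul_assoc]
      rw [pow_succ, ih, pow_succ, hstep, h2, Matrix.mul_one]
      simp only [Matrix.mul_assoc]

lemma mexp_conj (lam : ℝ) (h : lam ≠ 0) (M : Matrix (Idx r p) (Idx r p) ℝ) :
    mexp (D0mat r p lam * M * D0mat r p (1 / lam))
      = D0mat r p lam * mexp M * D0mat r p (1 / lam) := by
  have h1 := D0mat_mul_inv (r := r) (p := p) lam h
  have h2 := D0mat_inv_mul (r := r) (p := p) lam h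
  ext j k
  have hconj : ∀ N : Matrix (Idx r p) (Idx r p) ℝ,
      (D0mat r p lam * N * D0mat r p (1 / lam)) j k
        = lam ^ sigmaWt j * (N j k * (1 / lam) ^ sigmaWt k) := by
    intro N
    simp [D0mat, Matrix.diagonal_mul, Matrix.mul_diagonal, mul_assoc]
  show (∑' n : ℕ, ((n.factorial : ℝ)⁻¹ •
      (D0mat r p lam * M * D0mat r p (1 / lam)) ^ n) j k) = _
  have hterm : ∀ n : ℕ, ((n.factorial : ℝ)⁻¹ •
      (D0mat r p lam * M * D0mat r p (1 / lam)) ^ n) j k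
        = lam ^ sigmaWt j * ((((n.factorial : ℝ)⁻¹ • M ^ n) j k) * (1 / lam) ^ sigmaWt k) := by
    intro n
    rw [kolConjPow _ _ _ h1 h2, Matrix.smul_apply, hconj, Matrix.smul_apply]
    simp only [smul_eq_mul]
    ring
  calc (∑' n : ℕ, ((n.factorial : ℝ)⁻¹ •
        (D0mat r p lam * M * D0mat r p (1 / lam)) ^ n) j k)
      = ∑' n : ℕ, lam ^ sigmaWt j *
          ((((n.factorial : ℝ)⁻¹ • M ^ n) j k) * (1 / lam) ^ sigmaWt k) := by
        exact tsum_congr hterm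
    _ = lam ^ sigmaWt j * ((∑' n : ℕ, ((n.factorial : ℝ)⁻¹ • M ^ n) j k)
          * (1 / lam) ^ sigmaWt k) := by
        rw [tsum_mul_left, tsum_mul_right]
    _ = (D0mat r p lam * mexp M * D0mat r p (1 / lam)) j k := by
        rw [hconj]; rfl

/-- For a matrix supported on the subdiagonal blocks, conjugation by `D₀(λ)` is
multiplication by `λ²`. -/
lemma sparse_conj (lam : ℝ) (h : lam ≠ 0) (M : Matrix (Idx r p) (Idx r p) ℝ)
    (hM : ∀ j k : Idx r p, (j.1 : ℕ) ≠ (k.1 : ℕ) + 1 → M j k = 0) :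
    D0mat r p lam * M * D0mat r p (1 / lam) = (lam ^ 2) • M := by
  ext j k
  simp only [D0mat, Matrix.diagonal_mul, Matrix.mul_diagonal, Matrix.smul_apply, smul_eq_mul]
  by_cases hjk : (j.1 : ℕ) = (k.1 : ℕ) + 1
  · have hs : sigmaWt j = sigmaWt k + 2 := by
      simp [sigmaWt, hjk]; ring
    rw [hs, pow_add]
    have : lam ^ sigmaWt k * (1 / lam) ^ sigmaWt k = 1 := by
      rw [← mul_pow, mul_one_div_cancel h, one_pow]
    calc lam ^ sigmaWt k * lam ^ 2 * M j k * (1 / lam) ^ sigmaWt k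
        = (lam ^ sigmaWt k * (1 / lam) ^ sigmaWt k) * (lam ^ 2 * M j k) := by ring
      _ = lam ^ 2 * M j k := by rw [this, one_mul]
  · rw [hM j k hjk]; ring

lemma embed0_conj (lam : ℝ) (A₀ : Matrix (Fin (p 0)) (Fin (p 0)) ℝ) :
    D0mat r p lam * embed0 A₀ * D0mat r p lam = (lam ^ 2) • embed0 A₀ := by
  ext j k
  simp only [D0mat, Matrix.diagonal_mul, Matrix.mul_diagonal, Matrix.smul_apply, smul_eq_mul]
  by_cases hjk : j.1 = 0 ∧ k.1 = 0
  · have hj : sigmaWt j = 1 := by simp [sigmaWt, hjk.1]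
    have hk : sigmaWt k = 1 := by simp [sigmaWt, hjk.2]
    rw [hj, hk]; ring
  · have : embed0 A₀ j k = 0 := by
      simp only [embed0, Matrix.of_apply]
      rw [dif_neg hjk]
    rw [this]; ring

lemma D0mat_transpose (lam : ℝ) : (D0mat r p lam)ᵀ = D0mat r p lam := by
  simp [D0mat, Matrix.diagonal_transpose]

end Aux

set_option maxHeartbeats 1600000 in
/-- The homogeneity relations `C(t) = D₀(√t) C(1) D₀(√t)`,
`M̄(t) = D₀(√t) M̄(1) D₀(√t)` and `e^{tB} = D₀(√t) e^{B} D₀(1/√t)` hold for every `t > 0`. -/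
theorem homogeneity_relations {r : ℕ} {p : Fin (r + 1) → ℕ}
    (B : Matrix (Idx r p) (Idx r p) ℝ) (hB : IsKolB B)
    (A₀ : Matrix (Fin (p 0)) (Fin (p 0)) ℝ) (hA₀ : A₀.PosDef)
    (t : ℝ) (ht : 0 < t) :
    covMat B (embed0 A₀) t
        = D0mat r p (Real.sqrt t) * covMat B (embed0 A₀) 1 * D0mat r p (Real.sqrt t) ∧
    Mbar B (embed0 A₀) t
        = D0mat r p (Real.sqrt t) * Mbar B (embed0 A₀) 1 * D0mat r p (Real.sqrt t) ∧
    mexp (t • B) = D0mat r p (Real.sqrt t) * mexp B * D0mat r p (1 / Real.sqrt t) := by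
  set lam := Real.sqrt t with hlam
  have hlpos : 0 < lam := Real.sqrt_pos.mpr ht
  have hlne : lam ≠ 0 := hlpos.ne'
  have hsq : lam ^ 2 = t := Real.sq_sqrt ht.le
  set D := D0mat r p lam with hD
  set D' := D0mat r p (1 / lam) with hD'
  have h1 : D * D' = 1 := D0mat_mul_inv lam hlne
  have h2 : D' * D = 1 := D0mat_inv_mul lam hlne
  -- key: for any real u, `(t * u) • B = D * (u • B) * D'`
  have hscale : ∀ u : ℝ, D * (u • B) * D' = (t * u) • B := by
    intro u
    rw [sparse_conj lam hlne (u • B)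
      (fun j k hjk => by simp [Matrix.smul_apply, hB.sparse j k hjk]),
      hsq, smul_smul]
  have hmexp : ∀ u : ℝ, mexp ((t * u) • B) = D * mexp (u • B) * D' := by
    intro u
    rw [← hscale u, mexp_conj lam hlne]
  -- third relation
  have h3 : mexp (t • B) = D * mexp B * D' := by
    have := hmexp 1
    rw [mul_one, one_smul] at this
    exact this
  -- the key scaling for `embed0 A₀`
  have hA : D' * embed0 A₀ * D' = t⁻¹ • embed0 A₀ := by
    rw [hD', embed0_conj]
    congr 1
    rw [div_pow, one_pow, hsq]
    exact one_div t
  -- entrywise integrand scaling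
  have hF : ∀ u : ℝ,
      mexp ((t * u) • B) * embed0 A₀ * (mexp ((t * u) • B))ᵀ
        = t⁻¹ • (D * (mexp (u • B) * embed0 A₀ * (mexp (u • B))ᵀ) * D) := by
    intro u
    rw [hmexp u]
    rw [Matrix.transpose_mul, Matrix.transpose_mul, hD, hD', D0mat_transpose,
      D0mat_transpose, ← hD, ← hD']
    calc D * mexp (u • B) * D' * embed0 A₀ * (D' * ((mexp (u • B))ᵀ * D))
        = D * mexp (u • B) * (D' * embed0 A₀ * D') * (mexp (u • B))ᵀ * D := by
          simp only [Matrix.mul_assoc]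
      _ = t⁻¹ • (D * (mexp (u • B) * embed0 A₀ * (mexp (u • B))ᵀ) * D) := by
          rw [hA]
          simp only [Matrix.mul_smul, Matrix.smul_mul]
          simp only [Matrix.mul_assoc]
  -- first relation: the covariance matrix
  have hcov : covMat B (embed0 A₀) t = D * covMat B (embed0 A₀) 1 * D := by
    ext j k
    show (∫ s in (0:ℝ)..t,
        (mexp (s • B) * embed0 A₀ * (mexp (s • B))ᵀ) j k) = _
    have hsub : (∫ s in (0:ℝ)..t,
        (mexp (s • B) * embed0 A₀ * (mexp (s • B))ᵀ) j k)
        = t • ∫ u in (0:ℝ)..1,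
            (mexp ((t * u) • B) * embed0 A₀ * (mexp ((t * u) • B))ᵀ) j k := by
      rw [intervalIntegral.smul_integral_comp_mul_left
        (fun s => (mexp (s • B) * embed0 A₀ * (mexp (s • B))ᵀ) j k) t]
      norm_num
    rw [hsub]
    have hent : ∀ u : ℝ,
        (mexp ((t * u) • B) * embed0 A₀ * (mexp ((t * u) • B))ᵀ) j k
          = (t⁻¹ * (lam ^ sigmaWt j * lam ^ sigmaWt k)) *
              (mexp (u • B) * embed0 A₀ * (mexp (u • B))ᵀ) j k := by
      intro u
      rw [hF u]
      simp only [Matrix.smul_apply, smul_eq_mul, hD, D0mat, Matrix.diagonal_mul,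
        Matrix.mul_diagonal]
      ring
    rw [intervalIntegral.integral_congr (fun u _ => hent u),
      intervalIntegral.integral_const_mul]
    have hRHS : (D * covMat B (embed0 A₀) 1 * D) j k
        = lam ^ sigmaWt j * (covMat B (embed0 A₀) 1) j k * lam ^ sigmaWt k := by
      simp [hD, D0mat, Matrix.diagonal_mul, Matrix.mul_diagonal]
    rw [hRHS]
    have : (covMat B (embed0 A₀) 1) j k
        = ∫ u in (0:ℝ)..1, (mexp (u • B) * embed0 A₀ * (mexp (u • B))ᵀ) j k := rfl
    rw [this, smul_eq_mul]
    field_simp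
  refine ⟨hcov, ?_, h3⟩
  -- second relation: Mbar
  have hmexpneg : mexp (-(t • B)) = D * mexp (-((1:ℝ) • B)) * D' := by
    have hBneg : ∀ j k : Idx r p, (j.1 : ℕ) ≠ (k.1 : ℕ) + 1 → (-B) j k = 0 := by
      intro j k hjk
      simp [Matrix.neg_apply, hB.sparse j k hjk]
    have := sparse_conj lam hlne (-B) hBneg
    rw [hsq] at this
    have hneg : (t : ℝ) • (-B) = -(t • B) := smul_neg t B
    rw [hneg] at this
    rw [← this, mexp_conj lam hlne]
    congr 2
    simp
  simp only [Mbar]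
  rw [hmexpneg, hcov]
  rw [Matrix.transpose_mul, Matrix.transpose_mul, hD, hD', D0mat_transpose,
    D0mat_transpose, ← hD, ← hD']
  have e1 : D * mexp (-((1:ℝ) • B)) * D' * (D * covMat B (embed0 A₀) 1 * D) *
        (D' * ((mexp (-((1:ℝ) • B)))ᵀ * D))
      = D * mexp (-((1:ℝ) • B)) * (D' * D) * covMat B (embed0 A₀) 1 * (D * D') *
          ((mexp (-((1:ℝ) • B)))ᵀ * D) := by simp only [Matrix.mul_assoc]
  rw [e1, h1, h2, Matrix.mul_one, Matrix.mul_one]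
  simp only [Matrix.mul_assoc]
end
end

section
/- Let W(t) = e^{-tB^T} ∇_x, and for a multi-index β let W^β(t) = W_1^{β_1}(t) ∘ ⋯ ∘ W_d^{β_d}(t) (the components commute, being constant-coefficient first-order operators). Then there exist real constants c_α, indexed by multi-indices α with |α| = |β| and |α|_B ≥ |β|_B, with |c_α| bounded by a constant depending only on B and β, such that for every t > 0 and every smooth function f: W^β(t) f = Σ_{|α|=|β|, |α|_B ≥ |β|_B} c_α t^{(|α|_B - |β|_B)/2} D_x^α f. -/
open MeasureTheory Matrix Finset

noncomputable section

variable {r : ℕ} {p : Fin (r + 1) → ℕ}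

section WRaux

variable {r : ℕ} {p : Fin (r + 1) → ℕ}

private lemma WR_diff {E F : Type*} [NormedAddCommGroup E] [NormedSpace ℝ E]
    [NormedAddCommGroup F] [NormedSpace ℝ F] {f : E → F} (hf : ContDiff ℝ (⊤ : ℕ∞) f) :
    Differentiable ℝ f := hf.differentiable (by simp)

private def WRe (j : Idx r p) : Idx r p → ℕ := Pi.single j 1

private lemma WR_fderiv_smooth {f : (Idx r p → ℝ) → ℝ} (hf : ContDiff ℝ (⊤ : ℕ∞) f) :
    ContDiff ℝ (⊤ : ℕ∞) (fderiv ℝ f) :=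
  hf.fderiv_right (m := (⊤ : ℕ∞)) (by exact_mod_cast le_top)

private lemma WR_pdx_smooth (i : Idx r p) {f : (Idx r p → ℝ) → ℝ}
    (hf : ContDiff ℝ (⊤ : ℕ∞) f) : ContDiff ℝ (⊤ : ℕ∞) (pdx i f) := by
  have h := (ContinuousLinearMap.apply ℝ ℝ (Pi.single i 1)).contDiff.comp (WR_fderiv_smooth hf)
  exact h

private lemma WR_pdx_comm (i j : Idx r p) {f : (Idx r p → ℝ) → ℝ}
    (hf : ContDiff ℝ (⊤ : ℕ∞) f) : pdx i (pdx j f) = pdx j (pdx i f) := by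
  funext x
  have key : ∀ a b : Idx r p,
      pdx a (pdx b f) x = fderiv ℝ (fderiv ℝ f) x (Pi.single a 1) (Pi.single b 1) := by
    intro a b
    have hdf' : DifferentiableAt ℝ (fderiv ℝ f) x := (WR_diff (WR_fderiv_smooth hf)) x
    show fderiv ℝ (fun y => fderiv ℝ f y (Pi.single b 1)) x (Pi.single a 1) = _
    rw [fderiv_clm_apply hdf' (differentiableAt_const _)]
    simp
  rw [key i j, key j i]
  exact second_derivative_symmetric (fun y => ((WR_diff hf) y).hasFDerivAt)
    ((WR_diff (WR_fderiv_smooth hf) x).hasFDerivAt) _ _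

private lemma WR_pdx_sum (j : Idx r p) {A : Type*} (s : Finset A) (c : A → ℝ)
    (g : A → (Idx r p → ℝ) → ℝ) (x : Idx r p → ℝ)
    (hg : ∀ a ∈ s, DifferentiableAt ℝ (g a) x) :
    pdx j (fun y => ∑ a ∈ s, c a * g a y) x = ∑ a ∈ s, c a * pdx j (g a) x := by
  unfold pdx
  rw [fderiv_fun_sum (fun a ha => (hg a ha).const_mul (c a)), ContinuousLinearMap.sum_apply]
  refine Finset.sum_congr rfl fun a ha => ?_
  rw [fderiv_const_mul (hg a ha)]
  simp

private lemma WR_iter_smooth (i : Idx r p) (n : ℕ) {f : (Idx r p → ℝ) → ℝ}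
    (hf : ContDiff ℝ (⊤ : ℕ∞) f) : ContDiff ℝ (⊤ : ℕ∞) ((pdx i)^[n] f) := by
  induction n generalizing f with
  | zero => simpa using hf
  | succ n ih => rw [Function.iterate_succ_apply]; exact ih (WR_pdx_smooth i hf)

private lemma WR_fold_smooth (L : List (Idx r p)) (β : Idx r p → ℕ) {f : (Idx r p → ℝ) → ℝ}
    (hf : ContDiff ℝ (⊤ : ℕ∞) f) :
    ContDiff ℝ (⊤ : ℕ∞) (L.foldr (fun i g => (pdx i)^[β i] g) f) := by
  induction L with
  | nil => exact hf
  | cons a L ih => exact WR_iter_smooth a (β a) ih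

private lemma WR_Dx_smooth (β : Idx r p → ℕ) {f : (Idx r p → ℝ) → ℝ}
    (hf : ContDiff ℝ (⊤ : ℕ∞) f) : ContDiff ℝ (⊤ : ℕ∞) (Dx β f) :=
  WR_fold_smooth _ β hf

private lemma WR_pdx_iter_comm (i j : Idx r p) (n : ℕ) {g : (Idx r p → ℝ) → ℝ}
    (hg : ContDiff ℝ (⊤ : ℕ∞) g) :
    pdx j ((pdx i)^[n] g) = (pdx i)^[n] (pdx j g) := by
  induction n generalizing g with
  | zero => rfl
  | succ n ih =>
    rw [Function.iterate_succ_apply, Function.iterate_succ_apply,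
      ih (WR_pdx_smooth i hg), WR_pdx_comm j i hg]

private lemma WR_pdx_fold (j : Idx r p) (L : List (Idx r p)) (β : Idx r p → ℕ)
    {f : (Idx r p → ℝ) → ℝ} (hf : ContDiff ℝ (⊤ : ℕ∞) f) :
    pdx j (L.foldr (fun i g => (pdx i)^[β i] g) f)
      = L.foldr (fun i g => (pdx i)^[β i] g) (pdx j f) := by
  induction L with
  | nil => rfl
  | cons a L ih =>
    show pdx j ((pdx a)^[β a] _) = (pdx a)^[β a] _
    rw [WR_pdx_iter_comm a j (β a) (WR_fold_smooth L β hf), ih]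

private lemma WR_fold_congr (L : List (Idx r p)) (γ β : Idx r p → ℕ)
    (h : ∀ k ∈ L, γ k = β k) (f : (Idx r p → ℝ) → ℝ) :
    L.foldr (fun i g => (pdx i)^[γ i] g) f = L.foldr (fun i g => (pdx i)^[β i] g) f := by
  induction L with
  | nil => rfl
  | cons a L ih =>
    show (pdx a)^[γ a] _ = (pdx a)^[β a] _
    rw [h a List.mem_cons_self, ih (fun k hk => h k (List.mem_cons_of_mem a hk))]

private lemma WR_fold_single (j : Idx r p) (β : Idx r p → ℕ) (L : List (Idx r p))
    (hjL : j ∈ L) (hnd : L.Nodup) {f : (Idx r p → ℝ) → ℝ} (hf : ContDiff ℝ (⊤ : ℕ∞) f) :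
    L.foldr (fun i g => (pdx i)^[(β + WRe j) i] g) f
      = L.foldr (fun i g => (pdx i)^[β i] g) (pdx j f) := by
  induction L with
  | nil => simp at hjL
  | cons a L ih =>
    have hnd' := List.nodup_cons.mp hnd
    simp only [List.foldr_cons]
    by_cases ha : a = j
    · subst ha
      have h1 : (β + WRe a) a = β a + 1 := by simp [WRe]
      rw [h1, WR_fold_congr L (β + WRe a) β
          (fun k hk => by
            have hka : k ≠ a := fun h => hnd'.1 (h ▸ hk)
            simp [WRe, Pi.single_apply, hka]) f,
        Function.iterate_succ_apply, WR_pdx_fold a L β hf]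
    · have hjL' : j ∈ L := by
        rcases List.mem_cons.mp hjL with h | h
        · exact absurd h.symm ha
        · exact h
      have h1 : (β + WRe j) a = β a := by simp [WRe, Pi.single_apply, ha]
      rw [h1, ih hjL' hnd'.2]

private lemma WR_Dx_succ (j : Idx r p) (β : Idx r p → ℕ) {f : (Idx r p → ℝ) → ℝ}
    (hf : ContDiff ℝ (⊤ : ℕ∞) f) :
    Dx (β + WRe j) f = pdx j (Dx β f) := by
  unfold Dx
  rw [WR_fold_single j β _ (Finset.mem_toList.mpr (Finset.mem_univ j))
    Finset.univ.nodup_toList hf, WR_pdx_fold j _ β hf]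

private lemma WR_Bpow_sparse {B : Matrix (Idx r p) (Idx r p) ℝ} (hB : IsKolB B) :
    ∀ (n : ℕ) (j k : Idx r p), (j.1 : ℕ) ≠ (k.1 : ℕ) + n → (B ^ n) j k = 0 := by
  intro n
  induction n with
  | zero =>
    intro j k h
    rw [pow_zero]
    exact Matrix.one_apply_ne (fun hjk => h (by rw [hjk]; omega))
  | succ n ih =>
    intro j k h
    rw [pow_succ, Matrix.mul_apply]
    refine Finset.sum_eq_zero fun m _ => ?_
    by_cases h1 : (j.1 : ℕ) = (m.1 : ℕ) + n
    · rw [hB.sparse m k (by omega), mul_zero]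
    · rw [ih j m h1, zero_mul]

private def WRcM (B : Matrix (Idx r p) (Idx r p) ℝ) (i j : Idx r p) : ℝ :=
  ((((j.1 : ℕ) - (i.1 : ℕ)).factorial : ℝ))⁻¹ * (-1) ^ ((j.1 : ℕ) - (i.1 : ℕ)) *
    (B ^ ((j.1 : ℕ) - (i.1 : ℕ))) j i

private lemma WR_mexp_entry {B : Matrix (Idx r p) (Idx r p) ℝ} (hB : IsKolB B)
    (t : ℝ) (i j : Idx r p) :
    mexp (-(t • Bᵀ)) i j = WRcM B i j * t ^ ((j.1 : ℕ) - (i.1 : ℕ)) := by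
  have hterm : ∀ n : ℕ, ((n.factorial : ℝ)⁻¹ • (-(t • Bᵀ)) ^ n) i j
      = (n.factorial : ℝ)⁻¹ * ((-1) ^ n * t ^ n) * (B ^ n) j i := by
    intro n
    have h1 : -(t • Bᵀ) = (-t) • Bᵀ := by rw [neg_smul]
    rw [h1, smul_pow, Matrix.smul_apply, Matrix.smul_apply, ← Matrix.transpose_pow,
      Matrix.transpose_apply, smul_eq_mul, smul_eq_mul, neg_pow]
    ring
  have hmain : mexp (-(t • Bᵀ)) i j
      = ((((j.1 : ℕ) - (i.1 : ℕ)).factorial : ℝ)⁻¹ *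
          ((-1) ^ ((j.1 : ℕ) - (i.1 : ℕ)) * t ^ ((j.1 : ℕ) - (i.1 : ℕ))) *
          (B ^ ((j.1 : ℕ) - (i.1 : ℕ))) j i) := by
    unfold mexp
    rw [Matrix.of_apply]
    refine (tsum_eq_single ((j.1 : ℕ) - (i.1 : ℕ)) ?_).trans (hterm _)
    intro n hn
    rw [hterm n, WR_Bpow_sparse hB n j i (by omega), mul_zero]
  rw [hmain, WRcM]; ring

private lemma WRcM_zero {B : Matrix (Idx r p) (Idx r p) ℝ} {i j : Idx r p}
    (h : ¬ (i.1 : ℕ) ≤ (j.1 : ℕ)) : WRcM B i j = 0 := by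
  have h0 : (j.1 : ℕ) - (i.1 : ℕ) = 0 := by omega
  have hne : j ≠ i := by intro h'; rw [h'] at h; exact h le_rfl
  rw [WRcM, h0]
  simp [Matrix.one_apply_ne hne]

private lemma WR_Wop_apply (B : Matrix (Idx r p) (Idx r p) ℝ) (t : ℝ) (i : Idx r p)
    (f : (Idx r p → ℝ) → ℝ) (x : Idx r p → ℝ) :
    Wop B t i f x = ∑ j : Idx r p, mexp (-(t • Bᵀ)) i j * pdx j f x := by
  simp [Wop, Matrix.mulVec, dotProduct]

private lemma WR_bwt_add_single (α : Idx r p → ℕ) (j : Idx r p) :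
    bwt (α + WRe j) = bwt α + sigmaWt j := by
  unfold bwt
  simp only [Pi.add_apply, Nat.mul_add]
  rw [Finset.sum_add_distrib]
  congr 1
  simp [WRe, Pi.single_apply, mul_ite, Finset.sum_ite_eq']

private lemma WR_sum_add_single (α : Idx r p → ℕ) (j : Idx r p) :
    ∑ k, (α + WRe j) k = (∑ k, α k) + 1 := by
  simp only [Pi.add_apply]
  rw [Finset.sum_add_distrib]
  simp [WRe, Pi.single_apply, Finset.sum_ite_eq']

private lemma WR_sum_count_cons (i : Idx r p) (L : List (Idx r p)) :
    (∑ j : Idx r p, (i :: L).count j) = (∑ j : Idx r p, L.count j) + 1 := by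
  simp only [List.count_cons, beq_iff_eq]
  rw [Finset.sum_add_distrib]
  simp [Finset.sum_ite_eq']

private lemma WR_bwt_count_cons (i : Idx r p) (L : List (Idx r p)) :
    bwt (fun j : Idx r p => (i :: L).count j)
      = bwt (fun j : Idx r p => L.count j) + sigmaWt i := by
  unfold bwt
  simp only [List.count_cons, beq_iff_eq, Nat.mul_add]
  rw [Finset.sum_add_distrib]
  congr 1
  simp [mul_ite, Finset.sum_ite_eq']

private lemma WR_mem_Wset {β α : Idx r p → ℕ} (h1 : ∑ j, α j = ∑ j, β j)
    (h2 : bwt β ≤ bwt α) : α ∈ Wset β := by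
  simp only [Wset, Finset.mem_filter, Fintype.mem_piFinset, Finset.mem_range]
  refine ⟨fun j => ?_, h1, h2⟩
  have h3 : α j ≤ ∑ k, α k := Finset.single_le_sum (fun k _ => Nat.zero_le _) (Finset.mem_univ j)
  omega

private lemma WR_Wset_mem {β α : Idx r p → ℕ} (h : α ∈ Wset β) :
    ∑ j, α j = ∑ j, β j ∧ bwt β ≤ bwt α := (Finset.mem_filter.mp h).2

private lemma WR_foldr_replicate {F : Type*} (g : Idx r p → F → F) (n : ℕ) (i : Idx r p)
    (f : F) : (List.replicate n i).foldr g f = (g i)^[n] f := by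
  induction n with
  | zero => rfl
  | succ n ih => rw [List.replicate_succ, List.foldr_cons, ih, Function.iterate_succ_apply']

private lemma WR_Wpow_eq_flat (B : Matrix (Idx r p) (Idx r p) ℝ) (t : ℝ)
    (β : Idx r p → ℕ) (f : (Idx r p → ℝ) → ℝ) :
    Wpow B t β f = ((Finset.univ : Finset (Idx r p)).toList.flatMap
        fun i => List.replicate (β i) i).foldr (fun i g => Wop B t i g) f := by
  unfold Wpow
  generalize (Finset.univ : Finset (Idx r p)).toList = L
  induction L with
  | nil => rfl
  | cons a L ih =>
    rw [List.foldr_cons, List.flatMap_cons, List.foldr_append, ih, WR_foldr_replicate]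

private lemma WR_count_flat (β : Idx r p → ℕ) :
    ∀ L : List (Idx r p), L.Nodup → ∀ j : Idx r p,
      ((L.flatMap fun i => List.replicate (β i) i).count j) = if j ∈ L then β j else 0 := by
  intro L
  induction L with
  | nil => intro _ j; simp
  | cons a L ih =>
    intro hnd j
    rw [List.flatMap_cons, List.count_append, List.count_replicate,
      ih (List.nodup_cons.mp hnd).2 j]
    by_cases hj : j = a
    · subst hj
      simp [(List.nodup_cons.mp hnd).1]
    · simp [hj, List.mem_cons]
      exact fun h => absurd h.symm hj

private lemma WR_key {B : Matrix (Idx r p) (Idx r p) ℝ} (hB : IsKolB B) :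
    ∀ L : List (Idx r p), ∃ c : (Idx r p → ℕ) → ℝ,
      ∀ t : ℝ, 0 < t → ∀ f : (Idx r p → ℝ) → ℝ, ContDiff ℝ (⊤ : ℕ∞) f →
        ∀ x : Idx r p → ℝ,
        L.foldr (fun i g => Wop B t i g) f x
          = ∑ α ∈ Wset (fun j => L.count j),
              c α * t ^ (((bwt α : ℝ) - ((bwt (fun j => L.count j) : ℕ) : ℝ)) / 2)
                * Dx α f x := by
  intro L
  induction L with
  | nil =>
    refine ⟨fun α => if α = (fun _ => 0) then 1 else 0, fun t ht f hf x => ?_⟩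
    have h0 : (fun j : Idx r p => ([] : List (Idx r p)).count j) = fun _ => 0 := by
      funext j; simp
    rw [h0, List.foldr_nil]
    rw [Finset.sum_eq_single_of_mem (fun _ => 0) (WR_mem_Wset rfl le_rfl)
      (fun b _ hb => by simp [hb])]
    have hD : Dx (fun _ : Idx r p => 0) f = f := by
      unfold Dx
      generalize (Finset.univ : Finset (Idx r p)).toList = L
      induction L with
      | nil => rfl
      | cons a L ih => simpa using ih
    simp [hD]
  | cons i L ih =>
    obtain ⟨c, hc⟩ := ih
    set μ : Idx r p → ℕ := fun j => L.count j with hμdef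
    set μ' : Idx r p → ℕ := fun j => (i :: L).count j with hμ'def
    refine ⟨fun α' => ∑ j : Idx r p, ∑ α ∈ Wset μ,
      if α + WRe j = α' then WRcM B i j * c α else 0, fun t ht f hf x => ?_⟩
    have hμsum : ∑ j, μ' j = (∑ j, μ j) + 1 := WR_sum_count_cons i L
    have hμbwt : bwt μ' = bwt μ + sigmaWt i := WR_bwt_count_cons i L
    have hF : L.foldr (fun i g => Wop B t i g) f
        = fun y => ∑ α ∈ Wset μ,
            (c α * t ^ (((bwt α : ℝ) - ((bwt μ : ℕ) : ℝ)) / 2)) * Dx α f y := by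
      funext y; exact hc t ht f hf y
    have hdiff : ∀ α ∈ Wset μ, DifferentiableAt ℝ (Dx α f) x :=
      fun α _ => (WR_diff (WR_Dx_smooth α hf)) x
    rw [List.foldr_cons, WR_Wop_apply]
    calc ∑ j : Idx r p, mexp (-(t • Bᵀ)) i j * pdx j (L.foldr (fun i g => Wop B t i g) f) x
        = ∑ j : Idx r p, ∑ α ∈ Wset μ,
            (WRcM B i j * t ^ ((j.1 : ℕ) - (i.1 : ℕ))) *
            ((c α * t ^ (((bwt α : ℝ) - ((bwt μ : ℕ) : ℝ)) / 2)) *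
              Dx (α + WRe j) f x) := by
          refine Finset.sum_congr rfl fun j _ => ?_
          rw [hF, WR_pdx_sum j (Wset μ)
              (fun α => c α * t ^ (((bwt α : ℝ) - ((bwt μ : ℕ) : ℝ)) / 2))
              (fun α => Dx α f) x hdiff,
            WR_mexp_entry hB t i j, Finset.mul_sum]
          refine Finset.sum_congr rfl fun α hα => ?_
          rw [← WR_Dx_succ j α hf]
      _ = ∑ α' ∈ Wset μ',
            (∑ j : Idx r p, ∑ α ∈ Wset μ,
              if α + WRe j = α' then WRcM B i j * c α else 0)
              * t ^ (((bwt α' : ℝ) - ((bwt μ' : ℕ) : ℝ)) / 2) * Dx α' f x := by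
          symm
          simp only [Finset.sum_mul, ite_mul, zero_mul]
          rw [Finset.sum_comm]
          refine Finset.sum_congr rfl fun j _ => ?_
          rw [Finset.sum_comm]
          refine Finset.sum_congr rfl fun α hα => ?_
          rw [Finset.sum_ite_eq]
          by_cases hij : (i.1 : ℕ) ≤ (j.1 : ℕ)
          · have hα' := WR_Wset_mem hα
            have hmem : α + WRe j ∈ Wset μ' :=
              WR_mem_Wset (by rw [WR_sum_add_single, hα'.1, hμsum])
                (by rw [WR_bwt_add_single, hμbwt]
                    have hσ : sigmaWt i ≤ sigmaWt j := by unfold sigmaWt; omega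
                    have := hα'.2
                    omega)
            rw [if_pos hmem]
            have hre : (((bwt (α + WRe j) : ℕ) : ℝ) - ((bwt μ' : ℕ) : ℝ)) / 2
                = (((bwt α : ℕ) : ℝ) - ((bwt μ : ℕ) : ℝ)) / 2
                  + ((((j.1 : ℕ) - (i.1 : ℕ) : ℕ)) : ℝ) := by
              rw [WR_bwt_add_single, hμbwt]
              unfold sigmaWt
              push_cast [Nat.cast_sub hij]
              ring
            rw [hre, Real.rpow_add ht, Real.rpow_natCast]
            ring
          · rw [WRcM_zero hij]
            simp

end WRaux

/-- Representation of `W^β(t) = (e^{-tBᵀ}∇_x)^β`: there exist constants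
`c_α`, indexed by `α` with `|α| = |β|` and `|α|_B ≥ |β|_B` (hence depending only on `B` and
`β`), such that for every `t > 0` and every smooth `f`,
`W^β(t) f = Σ_α c_α t^{(|α|_B - |β|_B)/2} D^α f`. -/
theorem Wpow_representation {r : ℕ} {p : Fin (r + 1) → ℕ}
    (B : Matrix (Idx r p) (Idx r p) ℝ) (hB : IsKolB B) (β : Idx r p → ℕ) :
    ∃ c : (Idx r p → ℕ) → ℝ,
      ∀ t : ℝ, 0 < t → ∀ f : (Idx r p → ℝ) → ℝ, ContDiff ℝ (⊤ : ℕ∞) f →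
        ∀ x : Idx r p → ℝ,
        Wpow B t β f x
          = ∑ α ∈ Wset β, c α * t ^ (((bwt α : ℝ) - (bwt β : ℝ)) / 2) * Dx α f x := by
  obtain ⟨c, hc⟩ := WR_key hB
    ((Finset.univ : Finset (Idx r p)).toList.flatMap fun i => List.replicate (β i) i)
  have hμ : (fun j : Idx r p =>
      ((Finset.univ : Finset (Idx r p)).toList.flatMap
        fun i => List.replicate (β i) i).count j) = β := by
    funext j
    rw [WR_count_flat β _ Finset.univ.nodup_toList j,
      if_pos (Finset.mem_toList.mpr (Finset.mem_univ j))]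
  refine ⟨c, fun t ht f hf x => ?_⟩
  have h := hc t ht f hf x
  rw [hμ] at h
  rw [WR_Wpow_eq_flat]
  exact h
end
end
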